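/- Let R = ℤ[x]/(x² − 2x, 2ⁿ x) for n ≥ 1. Then the ideal (x) of R generated by x is, as an abelian group, isomorphic to ℤ/2ⁿ, and R/(x) ≅ ℤ as rings. -/
import Mathlib


/-- The ring `R = ℤ[x]/(x² − 2x, 2ⁿ x)`, the K-theory ring `K⁰(ℝP^{2n})`
with `x = 1 − [λ]`. -/
noncomputable abbrev KRing' (n : ℕ) : Type :=
  Polynomial ℤ ⧸ Ideal.span
    ({Polynomial.X ^ 2 - 2 * Polynomial.X, 2 ^ n * Polynomial.X} : Set (Polynomial ℤ))

/-- The class of `x` in `R = ℤ[x]/(x² − 2x, 2ⁿ x)`. -/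
noncomputable def KRingX' (n : ℕ) : KRing' n :=
  Ideal.Quotient.mk _ Polynomial.X

open Polynomial Ideal

noncomputable abbrev Iaux (n : ℕ) : Ideal (Polynomial ℤ) :=
  Ideal.span ({X ^ 2 - 2 * X, 2 ^ n * X} : Set (Polynomial ℤ))

private lemma Iaux_le (n : ℕ) : Iaux n ≤ Ideal.span ({X} : Set (Polynomial ℤ)) := by
  rw [Iaux, span_le]
  rintro p (rfl | rfl)
  · rw [SetLike.mem_coe, mem_span_singleton]
    exact ⟨X - 2, by ring⟩
  · rw [SetLike.mem_coe, mem_span_singleton]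
    exact ⟨2 ^ n, by ring⟩

/-- The quotient `R/(x) ≅ ℤ`. -/
private noncomputable def quotEquiv (n : ℕ) :
    (KRing' n ⧸ Ideal.span {KRingX' n}) ≃+* ℤ := by
  refine RingEquiv.trans (Ideal.quotEquivOfEq ?_) <| RingEquiv.trans
    (DoubleQuot.quotQuotEquivQuotSup (Iaux n) (Ideal.span {X})) <| RingEquiv.trans
    (Ideal.quotEquivOfEq (sup_eq_right.2 (Iaux_le n))) <| RingEquiv.trans
    (Ideal.quotEquivOfEq (show Ideal.span ({X} : Set (Polynomial ℤ))
      = Ideal.span {X - C 0} by simp)) (quotientSpanXSubCAlgEquiv (0 : ℤ)).toRingEquiv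
  rw [Ideal.map_span, Set.image_singleton]
  rfl

private lemma mk_zsmul (n : ℕ) (k : ℤ) :
    k • KRingX' n = Ideal.Quotient.mk (Iaux n) ((k : Polynomial ℤ) * X) := by
  rw [KRingX', ← map_zsmul, zsmul_eq_mul]

private lemma smul_eq' (n : ℕ) (p : Polynomial ℤ) :
    (p.eval 2) • KRingX' n = (Ideal.Quotient.mk (Iaux n) p) * KRingX' n := by
  rw [mk_zsmul]
  show _ = Ideal.Quotient.mk (Iaux n) (p * X)
  rw [Ideal.Quotient.eq]
  have hdvd : (X - C 2) ∣ (p - C (p.eval 2)) := X_sub_C_dvd_sub_C_eval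
  obtain ⟨q, hq⟩ := hdvd
  have key : ((p.eval 2 : ℤ) : Polynomial ℤ) * X - p * X = -q * (X ^ 2 - 2 * X) := by
    have h2 : p - C (p.eval 2) = (X - C 2) * q := hq
    rw [show (C 2 : Polynomial ℤ) = 2 from map_ofNat C 2] at h2
    rw [← eq_intCast (Polynomial.C : ℤ →+* Polynomial ℤ)]
    linear_combination (-X) * h2
  rw [key]
  exact Ideal.mul_mem_left _ _ (Ideal.subset_span (Or.inl rfl))

private lemma smul_zero_iff (n : ℕ) (k : ℤ) :
    k • KRingX' n = 0 ↔ ((2 : ℤ) ^ n) ∣ k := by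
  constructor
  · intro h
    have hmem : (k : Polynomial ℤ) * X ∈ Iaux n := by
      have : Ideal.Quotient.mk (Iaux n) ((k : Polynomial ℤ) * X) = 0 := by
        rw [← mk_zsmul, h]
      rwa [Ideal.Quotient.eq_zero_iff_mem] at this
    rw [Iaux, Ideal.mem_span_pair] at hmem
    obtain ⟨u, v, huv⟩ := hmem
    have := congrArg (Polynomial.eval 2) huv
    simp only [eval_add, eval_mul, eval_sub, eval_pow, eval_X, eval_ofNat,
      eval_intCast, eval_intCast] at this
    have h2 : (2 : ℤ) * k = 2 * (2 ^ n * v.eval 2) := by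
      push_cast at this ⊢
      linarith
    have hk : k = 2 ^ n * v.eval 2 := by linarith
    exact ⟨v.eval 2, hk⟩
  · rintro ⟨m, rfl⟩
    rw [mk_zsmul, Ideal.Quotient.eq_zero_iff_mem, Ideal.mem_span_pair]
    refine ⟨0, (m : Polynomial ℤ), ?_⟩
    push_cast
    ring

private noncomputable def genHom (n : ℕ) :
    ℤ →+ ↥(Ideal.span {KRingX' n} : Ideal (KRing' n)) :=
  zmultiplesHom _ ⟨KRingX' n, Ideal.subset_span rfl⟩

private lemma genHom_surjective (n : ℕ) : Function.Surjective (genHom n) := by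
  rintro ⟨y, hy⟩
  rw [Ideal.mem_span_singleton'] at hy
  obtain ⟨r, hr⟩ := hy
  obtain ⟨p, rfl⟩ := Ideal.Quotient.mk_surjective r
  refine ⟨p.eval 2, ?_⟩
  apply Subtype.ext
  show (p.eval 2) • KRingX' n = y
  rw [smul_eq' n p, hr]

private lemma genHom_ker (n : ℕ) :
    (genHom n).ker = AddSubgroup.zmultiples (((2 ^ n : ℕ) : ℤ)) := by
  ext k
  rw [AddMonoidHom.mem_ker, Int.mem_zmultiples_iff]
  have : (genHom n) k = 0 ↔ k • KRingX' n = 0 := by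
    rw [Subtype.ext_iff]
    rfl
  rw [this, smul_zero_iff]
  push_cast
  rfl

/-- Let `R = ℤ[x]/(x² − 2x, 2ⁿ x)` for `n ≥ 1`.  Then the ideal `(x)` of `R`
is, as an abelian group, isomorphic to `ℤ/2ⁿ`, and `R/(x) ≅ ℤ` as rings. -/
theorem stmt10 (n : ℕ) (hn : 1 ≤ n) :
    Nonempty (↥(Ideal.span {KRingX' n} : Ideal (KRing' n)) ≃+ ZMod (2 ^ n)) ∧
    Nonempty ((KRing' n ⧸ Ideal.span {KRingX' n}) ≃+* ℤ) := by
  constructor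
  · refine ⟨AddEquiv.trans
      (QuotientAddGroup.quotientKerEquivOfSurjective (genHom n) (genHom_surjective n)).symm <|
      AddEquiv.trans (QuotientAddGroup.quotientAddEquivOfEq (genHom_ker n))
      (Int.quotientZMultiplesNatEquivZMod (2 ^ n))⟩
  · exact ⟨quotEquiv n⟩
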